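/- Let G and H be t.d.l.c. groups and ψ : H → G a continuous injective group homomorphism such that ψ(H) is cocompact in G. If G is regionally expansive, then H is regionally expansive. -/

import Mathlib

open scoped Pointwise

open scoped Pointwise

/-- The quasi-center of a topological group: the set of elements with open centralizer. -/
def QuasiCenter (G : Type*) [Group G] [TopologicalSpace G] : Set G :=
  {g : G | IsOpen ((Subgroup.centralizer {g} : Subgroup G) : Set G)}

/-- A topological group is compactly generated if it is generated by a compact subset. -/
def IsCompactlyGeneratedGroup (G : Type*) [Group G] [TopologicalSpace G] : Prop :=
  ∃ S : Set G, IsCompact S ∧ Subgroup.closure S = ⊤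

/-- A t.d.l.c. group is regionally expansive if it has a compactly generated open subgroup `O`
together with a compact open subgroup `W` of `O` whose normal core in `O` is trivial. -/
def RegionallyExpansive (G : Type*) [Group G] [TopologicalSpace G] : Prop :=
  ∃ O W : Subgroup G,
    IsOpen (O : Set G) ∧
    (∃ S : Set G, S ⊆ (O : Set G) ∧ IsCompact S ∧ Subgroup.closure S = O) ∧
    W ≤ O ∧ IsOpen (W : Set G) ∧ IsCompact (W : Set G) ∧
    (W.subgroupOf O).normalCore = ⊥

/-- A topological group is topologically simple if it is non-trivial and its only closed
normal subgroups are the trivial subgroup and the whole group. -/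
def TopologicallySimple (G : Type*) [Group G] [TopologicalSpace G] : Prop :=
  Nontrivial G ∧ ∀ N : Subgroup G, N.Normal → IsClosed (N : Set G) → N = ⊥ ∨ N = ⊤

/-- The monolith: the intersection of all non-trivial closed normal subgroups. -/
def Monolith (G : Type*) [Group G] [TopologicalSpace G] : Subgroup G :=
  ⨅ (N : Subgroup G) (_ : N ≠ ⊥) (_ : N.Normal) (_ : IsClosed (N : Set G)), N

/-- A topological group is monolithic if its monolith is non-trivial. -/
def Monolithic (G : Type*) [Group G] [TopologicalSpace G] : Prop :=
  Monolith G ≠ ⊥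

/-- A t.d.l.c. group is robustly monolithic if it is monolithic and the monolith is
non-discrete, regionally expansive and topologically simple. -/
def RobustlyMonolithic (G : Type*) [Group G] [TopologicalSpace G] : Prop :=
  Monolithic G ∧ ¬ DiscreteTopology ↥(Monolith G) ∧
    RegionallyExpansive ↥(Monolith G) ∧ TopologicallySimple ↥(Monolith G)

/-- [A]-semisimple: trivial quasi-center and no non-trivial abelian locally normal subgroup. -/
def ASemisimple (G : Type*) [Group G] [TopologicalSpace G] : Prop :=
  QuasiCenter G = {1} ∧
    ∀ H : Subgroup G, IsOpen ((Subgroup.normalizer (H : Set G) : Subgroup G) : Set G) →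
      (∀ a ∈ H, ∀ b ∈ H, a * b = b * a) → H = ⊥

/-- A minimal non-trivial closed normal subgroup. -/
def IsMinimalClosedNormal {G : Type*} [Group G] [TopologicalSpace G] (N : Subgroup G) : Prop :=
  N ≠ ⊥ ∧ N.Normal ∧ IsClosed (N : Set G) ∧
    ∀ M : Subgroup G, M ≠ ⊥ → M.Normal → IsClosed (M : Set G) → M ≤ N → M = N

/-- The quasi-centralizer of a subgroup `K` in `G`: the set of elements of `G` centralizing
some open subgroup of `K`. -/
def QuasiCentralizer {G : Type*} [Group G] [TopologicalSpace G] (K : Subgroup G) : Set G :=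
  {g : G | ∃ V : Subgroup G, V ≤ K ∧ IsOpen {k : ↥K | (k : G) ∈ V} ∧ ∀ v ∈ V, g * v = v * g}

/-- A SIN-group: a basis of identity neighborhoods consisting of conjugation-invariant
open sets. -/
def SINGroup (G : Type*) [Group G] [TopologicalSpace G] : Prop :=
  ∀ U ∈ nhds (1 : G), ∃ V : Set G, IsOpen V ∧ (1 : G) ∈ V ∧ V ⊆ U ∧
    ∀ g x : G, x ∈ V → g * x * g⁻¹ ∈ V

/-- The quasi-centralizer of `K` in `H`: elements of `H` centralizing an open subgroup of `K`. -/
def QuasiCentralizerIn {G : Type*} [Group G] [TopologicalSpace G] (H K : Subgroup G) : Set G :=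
  {h : G | h ∈ H ∧ ∃ V : Subgroup G, V ≤ K ∧ IsOpen {k : ↥K | (k : G) ∈ V} ∧
    ∀ v ∈ V, h * v = v * h}

/-- The commensurator of `K` in `H`: elements `h ∈ H` such that `K` and `hKh⁻¹` are
commensurate. -/
def CommensuratorIn {G : Type*} [Group G] (H K : Subgroup G) : Set G :=
  {h : G | h ∈ H ∧ Subgroup.Commensurable K (Subgroup.map (MulAut.conj h).toMonoidHom K)}

/-- Topologically characteristically simple: the only closed subgroups invariant under every
topological group automorphism are trivial and the whole group. -/
def TopologicallyCharacteristicallySimple (G : Type*) [Group G] [TopologicalSpace G] : Prop :=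
  ∀ N : Subgroup G, IsClosed (N : Set G) →
    (∀ φ : G ≃* G, Continuous ⇑φ → Continuous ⇑φ.symm → Subgroup.map φ.toMonoidHom N = N) →
    N = ⊥ ∨ N = ⊤

/-- the subgroup of elements all of whose `A`-conjugates lie in `W`. -/
def ConjCore {G : Type*} [Group G] (W : Subgroup G) (A : Set G) : Subgroup G where
  carrier := {g : G | ∀ a ∈ A, a * g * a⁻¹ ∈ W}
  one_mem' := by
    intro a _
    simpa using W.one_mem
  mul_mem' := by
    intro x y hx hy a ha
    have h : (a * x * a⁻¹) * (a * y * a⁻¹) = a * (x * y) * a⁻¹ := by group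
    rw [← h]
    exact W.mul_mem (hx a ha) (hy a ha)
  inv_mem' := by
    intro x hx a ha
    have h : (a * x * a⁻¹)⁻¹ = a * x⁻¹ * a⁻¹ := by group
    rw [← h]
    exact W.inv_mem (hx a ha)

lemma mem_conjCore {G : Type*} [Group G] {W : Subgroup G} {A : Set G} {g : G} :
    g ∈ ConjCore W A ↔ ∀ a ∈ A, a * g * a⁻¹ ∈ W := Iff.rfl

lemma my_vanDantzig {H : Type*} [Group H] [TopologicalSpace H] [IsTopologicalGroup H]
    [T2Space H] [TotallyDisconnectedSpace H] [LocallyCompactSpace H] :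
    ∃ U : Subgroup H, IsOpen (U : Set H) ∧ IsCompact (U : Set H) := by
  obtain ⟨C, hCcomp, hCnhds⟩ := exists_compact_mem_nhds (1 : H)
  obtain ⟨V, hVclopen, h1V, hVC⟩ :=
    loc_compact_Haus_tot_disc_of_zero_dim.mem_nhds_iff.1 hCnhds
  have hVopen : IsOpen V := hVclopen.2
  have hVcomp : IsCompact V := hCcomp.of_isClosed_subset hVclopen.1 hVC
  -- find T ∈ 𝓝 1 with V * T ⊆ V
  have hmul : ∃ T ∈ nhds (1 : H), V * T ⊆ V := by
    apply hVcomp.induction_on (p := fun S ↦ ∃ T ∈ nhds (1 : H), S * T ⊆ V)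
      ⟨Set.univ, by simp only [Filter.univ_mem, Set.empty_mul, Set.empty_subset, and_self]⟩
      (fun _ _ huv ⟨T, hT, mem⟩ ↦ ⟨T, hT, (Set.mul_subset_mul_right huv).trans mem⟩)
      (fun U' V' ⟨T₁, hT₁, mem1⟩ ⟨T₂, hT₂, mem2⟩ ↦ ⟨T₁ ∩ T₂, Filter.inter_mem hT₁ hT₂, by
        rw [Set.union_mul]
        exact Set.union_subset
          ((Set.mul_subset_mul_left Set.inter_subset_left).trans mem1)
          ((Set.mul_subset_mul_left Set.inter_subset_right).trans mem2)⟩)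
    intro x memW
    have : (x, 1) ∈ (fun p : H × H ↦ p.1 * p.2) ⁻¹' V := by simpa using memW
    rcases isOpen_prod_iff.mp (continuous_mul.isOpen_preimage V hVopen) x 1 this with
      ⟨U', V', U'open, V'open, xmemU, onememV, prodsub⟩
    have h6 : U' * V' ⊆ V :=
      Set.mul_subset_iff.mpr fun _ hx _ hy ↦ prodsub (Set.mk_mem_prod hx hy)
    exact ⟨U' ∩ V, ⟨U', U'open.mem_nhds xmemU, V, fun _ a ↦ a, rfl⟩,
      V', V'open.mem_nhds onememV,
      fun _ a ↦ h6 ((Set.mul_subset_mul_right Set.inter_subset_left) a)⟩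
  obtain ⟨T, hTnhds, hVT⟩ := hmul
  obtain ⟨U0, hU0T, hU0open, h1U0⟩ := mem_nhds_iff.mp hTnhds
  set V' : Set H := U0 ∩ U0⁻¹ with hV'def
  have hV'symm : V'⁻¹ = V' := by
    simp [hV'def, Set.inter_comm]
  have hV'open : IsOpen V' := hU0open.inter hU0open.inv
  have h1V' : (1 : H) ∈ V' := ⟨h1U0, by simpa using h1U0⟩
  have hV'T : V' ⊆ T := fun x hx ↦ hU0T hx.1
  refine ⟨Subgroup.closure V', ?_, ?_⟩
  · apply Subgroup.isOpen_of_mem_nhds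
    exact Filter.mem_of_superset (hV'open.mem_nhds h1V') Subgroup.subset_closure
  · have hsub : (Subgroup.closure V' : Set H) ⊆ V := by
      intro x hx
      have hx' : x ∈ Submonoid.closure (V' ∪ V'⁻¹) := by
        rw [← Subgroup.closure_toSubmonoid]
        exact hx
      obtain ⟨l, hl, rfl⟩ := Submonoid.exists_list_of_mem_closure hx'
      have key : ∀ (l : List H), (∀ y ∈ l, y ∈ V') → ∀ v ∈ V, v * l.prod ∈ V := by
        intro l
        induction l with
        | nil => intro _ v hv; simpa using hv
        | cons y t ih =>
          intro hmem v hv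
          rw [List.prod_cons, ← mul_assoc]
          exact ih (fun z hz ↦ hmem z (List.mem_cons_of_mem _ hz))
            (v * y) (hVT (Set.mul_mem_mul hv (hV'T (hmem y (List.mem_cons_self (a := y) (l := t))))))
      have := key l (fun y hy ↦ by
        rcases hl y hy with h | h
        · exact h
        · rw [← hV'symm]; exact h) 1 h1V
      simpa using this
    exact hVcomp.of_isClosed_subset
      (Subgroup.isClosed_of_isOpen _ (by
        apply Subgroup.isOpen_of_mem_nhds
        exact Filter.mem_of_superset (hV'open.mem_nhds h1V') Subgroup.subset_closure)) hsub

theorem stmt14 (G H : Type*) [Group G] [TopologicalSpace G] [IsTopologicalGroup G] [T2Space G] [TotallyDisconnectedSpace G] [LocallyCompactSpace G]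
    [Group H] [TopologicalSpace H] [IsTopologicalGroup H] [T2Space H] [TotallyDisconnectedSpace H] [LocallyCompactSpace H]
    (ψ : H →* G) (hcont : Continuous ψ) (hinj : Function.Injective ψ)
    (hcocompact : ∃ X : Set G, IsCompact X ∧ Set.range ⇑ψ * X = Set.univ)
    (hre : RegionallyExpansive G) :
    RegionallyExpansive H := by
  obtain ⟨O, W, hOopen, ⟨S, hSO, hScomp, hSgen⟩, hWO, hWopen, hWcomp, hcore⟩ := hre
  obtain ⟨X, hXcomp, hXcover⟩ := hcocompact
  have hWclosed : IsClosed (W : Set G) := Subgroup.isClosed_of_isOpen _ hWopen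
  -- trivial core, unpacked
  have hcoreP : ∀ g : G, g ∈ W → (∀ o ∈ O, o * g * o⁻¹ ∈ W) → g = 1 := by
    intro g hgW hcj
    have hgO : g ∈ O := hWO hgW
    have hmem : (⟨g, hgO⟩ : O) ∈ (W.subgroupOf O).normalCore := by
      show ∀ b : O, b * (⟨g, hgO⟩ : O) * b⁻¹ ∈ W.subgroupOf O
      intro b
      rw [Subgroup.mem_subgroupOf]
      push_cast
      exact hcj b b.2
    rw [hcore, Subgroup.mem_bot] at hmem
    exact congrArg Subtype.val hmem
  -- the enlarged compactly generated open subgroup O₁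
  set Y : Set G := S ∪ X with hYdef
  set O₁ : Subgroup G := Subgroup.closure Y with hO₁def
  have hOO₁ : O ≤ O₁ := by
    rw [← hSgen]
    exact Subgroup.closure_mono Set.subset_union_left
  have hXO₁ : X ⊆ (O₁ : Set G) := fun x hx => Subgroup.subset_closure (Or.inr hx)
  have hYO₁ : Y ⊆ (O₁ : Set G) := Subgroup.subset_closure
  have hO₁open : IsOpen (O₁ : Set G) := Subgroup.isOpen_mono hOO₁ hOopen
  have hO₁closed : IsClosed (O₁ : Set G) := Subgroup.isClosed_of_isOpen _ hO₁open
  have hYcomp : IsCompact Y := hScomp.union hXcomp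
  -- finite subcover of X by left cosets of W
  obtain ⟨E, hEX, hEfin, hXcov⟩ : ∃ E ⊆ X, E.Finite ∧ X ⊆ ⋃ e ∈ E, e • (W : Set G) := by
    apply hXcomp.elim_finite_subcover_image (fun e _ => hWopen.smul e)
    intro x hx
    exact Set.mem_biUnion hx (Set.mem_smul_set.mpr ⟨1, W.one_mem, by simp⟩)
  -- W̃ : intersection of W with its E-conjugates
  set Wt : Subgroup G := W ⊓ ConjCore W E⁻¹ with hWtdef
  have hWtmem : ∀ g : G, g ∈ Wt ↔ (g ∈ W ∧ ∀ e ∈ E, e⁻¹ * g * e ∈ W) := by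
    intro g
    rw [hWtdef, Subgroup.mem_inf, mem_conjCore]
    constructor
    · rintro ⟨h1, h2⟩
      refine ⟨h1, fun e he => ?_⟩
      have := h2 e⁻¹ (by simpa using he)
      simpa using this
    · rintro ⟨h1, h2⟩
      refine ⟨h1, fun a ha => ?_⟩
      rw [Set.mem_inv] at ha
      have := h2 a⁻¹ ha
      simpa using this
  have hWtW : Wt ≤ W := inf_le_left
  have hWtcoe : (Wt : Set G) = (W : Set G) ∩ ⋂ e ∈ E, (fun g => e⁻¹ * g * e) ⁻¹' (W : Set G) := by
    ext g
    simp only [SetLike.mem_coe, hWtmem g, Set.mem_inter_iff, Set.mem_iInter, Set.mem_preimage]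
  have hWtopen : IsOpen (Wt : Set G) := by
    rw [hWtcoe]
    exact hWopen.inter (hEfin.isOpen_biInter (fun e _ =>
      hWopen.preimage ((continuous_mul_right e).comp (continuous_mul_left e⁻¹))))
  have hWtclosed : IsClosed (Wt : Set G) := by
    rw [hWtcoe]
    exact hWclosed.inter (isClosed_biInter (fun e _ =>
      hWclosed.preimage ((continuous_mul_right e).comp (continuous_mul_left e⁻¹))))
  have hWtcomp : IsCompact (Wt : Set G) := hWcomp.of_isClosed_subset hWtclosed hWtW
  -- W* : the W-conjugation core of W̃
  set Wst : Subgroup G := ConjCore Wt (W : Set G) with hWstdef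
  have hWstWt : Wst ≤ Wt := by
    intro g hg
    have := hg 1 W.one_mem
    simpa using this
  have hWstW : Wst ≤ W := hWstWt.trans hWtW
  have hWstconj : ∀ w ∈ W, ∀ g ∈ Wst, w * g * w⁻¹ ∈ Wst := by
    intro w hw g hg w' hw'
    have h := hg (w' * w) (W.mul_mem hw' hw)
    rw [show w' * (w * g * w⁻¹) * w'⁻¹ = (w' * w) * g * (w' * w)⁻¹ by group]
    exact h
  have hWstclosed : IsClosed (Wst : Set G) := by
    have : (Wst : Set G) = ⋂ w ∈ (W : Set G), (fun g => w * g * w⁻¹) ⁻¹' (Wt : Set G) := by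
      ext g
      simp only [SetLike.mem_coe, Set.mem_iInter, Set.mem_preimage]
      exact Iff.rfl
    rw [this]
    exact isClosed_biInter (fun w _ => hWtclosed.preimage
      ((continuous_mul_right w⁻¹).comp (continuous_mul_left w)))
  -- finite right-coset cover of W by Wt to get openness of Wst
  obtain ⟨F, hFW, hFfin, hWFcov⟩ : ∃ F ⊆ (W : Set G), F.Finite ∧
      (W : Set G) ⊆ ⋃ f ∈ F, {x : G | x * f⁻¹ ∈ Wt} := by
    apply hWcomp.elim_finite_subcover_image
    · intro w _
      exact hWtopen.preimage (continuous_mul_right w⁻¹)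
    · intro x hx
      exact Set.mem_biUnion hx (by simp [Wt.one_mem])
  have hWstcoe : (Wst : Set G) = ⋂ f ∈ F, (fun g => f * g * f⁻¹) ⁻¹' (Wt : Set G) := by
    apply Set.Subset.antisymm
    · intro g hg
      simp only [Set.mem_iInter, Set.mem_preimage]
      intro f hf
      exact hg f (hFW hf)
    · intro g hg
      simp only [Set.mem_iInter, Set.mem_preimage] at hg
      intro w hw
      obtain ⟨f, hf, hwf⟩ := Set.mem_iUnion₂.mp (hWFcov hw)
      have hv : w * f⁻¹ ∈ Wt := hwf
      have hveq : (w * f⁻¹) * f = w := inv_mul_cancel_right w f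
      have : w * g * w⁻¹ = (w * f⁻¹) * (f * g * f⁻¹) * (w * f⁻¹)⁻¹ := by
        rw [← hveq]; group
      rw [this]
      exact Wt.mul_mem (Wt.mul_mem hv (hg f hf)) (Wt.inv_mem hv)
  have hWstopen : IsOpen (Wst : Set G) := by
    rw [hWstcoe]
    exact hFfin.isOpen_biInter (fun f _ => hWtopen.preimage
      ((continuous_mul_right f⁻¹).comp (continuous_mul_left f)))
  have hWstcomp : IsCompact (Wst : Set G) := hWcomp.of_isClosed_subset hWstclosed hWstW
  -- Q and D
  set Q : Subgroup H := Subgroup.comap ψ O₁ with hQdef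
  set D : Subgroup G := Subgroup.map ψ Q with hDdef
  -- decomposition of O₁
  have hdecomp : ∀ o ∈ O₁, ∃ q e w, q ∈ Q ∧ e ∈ E ∧ w ∈ W ∧ o = ψ q * (e * w) := by
    intro o ho
    have : o ∈ Set.range ⇑ψ * X := by rw [hXcover]; trivial
    obtain ⟨a, ⟨q, rfl⟩, x, hxX, hax⟩ := Set.mem_mul.mp this
    obtain ⟨e, he, hxe⟩ := Set.mem_iUnion₂.mp (hXcov hxX)
    obtain ⟨w, hw, hew⟩ := Set.mem_smul_set.mp hxe
    have hxO₁ : x ∈ O₁ := hXO₁ hxX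
    have hqQ : q ∈ Q := by
      have : ψ q = o * x⁻¹ := by rw [← hax]; group
      show ψ q ∈ O₁
      rw [this]
      exact O₁.mul_mem ho (O₁.inv_mem hxO₁)
    refine ⟨q, e, w, hqQ, he, hw, ?_⟩
    rw [show e * w = x from hew, hax]
  -- KEY triviality
  have hkey : ∀ g : G, g ∈ Wst → (∀ q ∈ Q, (ψ q)⁻¹ * g * ψ q ∈ Wst) → g = 1 := by
    intro g hg hconj
    have h2 : ∀ o' ∈ O₁, o'⁻¹ * g * o' ∈ W := by
      intro o' ho'
      obtain ⟨q, e, w, hq, he, hw, rfl⟩ := hdecomp o' ho'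
      have h3 : (ψ q)⁻¹ * g * ψ q ∈ Wst := hconj q hq
      have h4 : e⁻¹ * ((ψ q)⁻¹ * g * ψ q) * e ∈ W :=
        ((hWtmem _).1 (hWstWt h3)).2 e he
      have h5 : w⁻¹ * (e⁻¹ * ((ψ q)⁻¹ * g * ψ q) * e) * w ∈ W := by
        have := W.mul_mem (W.mul_mem (W.inv_mem hw) h4) hw
        exact this
      rw [show (ψ q * (e * w))⁻¹ * g * (ψ q * (e * w)) =
        w⁻¹ * (e⁻¹ * ((ψ q)⁻¹ * g * ψ q) * e) * w by group]
      exact h5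
    apply hcoreP g (hWstW hg)
    intro o hoO
    have := h2 o⁻¹ (O₁.inv_mem (hOO₁ hoO))
    simpa using this
  -- the closure of the image of Q
  set K₂ : Subgroup G := D.topologicalClosure with hK₂def
  have hDK₂ : D ≤ K₂ := Subgroup.le_topologicalClosure D
  have hK₂closed : IsClosed (K₂ : Set G) := Subgroup.isClosed_topologicalClosure D
  have hK₂O₁ : K₂ ≤ O₁ := Subgroup.topologicalClosure_minimal D (Subgroup.map_comap_le ψ O₁) hO₁closed
  have hψK₂ : ∀ q ∈ Q, ψ q ∈ K₂ := fun q hq => hDK₂ (Subgroup.mem_map.mpr ⟨q, hq, rfl⟩)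
  -- density-based transversal
  have htrans : ∀ k ∈ K₂, ∃ q, q ∈ Q ∧ (ψ q)⁻¹ * k ∈ Wt ∧ (ψ q)⁻¹ * k ∈ K₂ := by
    intro k hk
    have hk' : k ∈ closure (D : Set G) := by
      rw [← Subgroup.topologicalClosure_coe]
      exact hk
    have hU : IsOpen (k • (Wt : Set G)) := hWtopen.smul k
    have hkU : k ∈ k • (Wt : Set G) := Set.mem_smul_set.mpr ⟨1, Wt.one_mem, by simp⟩
    obtain ⟨d, hdU, hdD⟩ := mem_closure_iff.mp hk' _ hU hkU
    obtain ⟨q, hqQ, rfl⟩ := Subgroup.mem_map.mp hdD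
    obtain ⟨v, hvWt, hveq⟩ := Set.mem_smul_set.mp hdU
    have h1 : (ψ q)⁻¹ * k ∈ Wt := by
      have : (ψ q)⁻¹ * k = v⁻¹ := by
        rw [← hveq]; show (k * v)⁻¹ * k = v⁻¹; group
      rw [this]
      exact Wt.inv_mem hvWt
    exact ⟨q, hqQ, h1, K₂.mul_mem (K₂.inv_mem (hψK₂ q hqQ)) hk⟩
  -- compact sets C, Y', B
  set C : Set G := insert (1 : G) (E * (W : Set G)) with hCdef
  have hCcomp : IsCompact C := ((hEfin.isCompact).mul hWcomp).insert 1
  have h1C : (1 : G) ∈ C := Set.mem_insert _ _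
  have hdecompC : ∀ o ∈ O₁, ∃ q c, q ∈ Q ∧ c ∈ C ∧ o = ψ q * c := by
    intro o ho
    obtain ⟨q, e, w, hq, he, hw, heq⟩ := hdecomp o ho
    exact ⟨q, e * w, hq, Set.mem_insert_of_mem _ (Set.mul_mem_mul he hw), heq⟩
  set Y' : Set G := insert (1 : G) (Y ∪ Y⁻¹) with hY'def
  have hY'comp : IsCompact Y' := (hYcomp.union hYcomp.inv).insert 1
  set B : Set G := (K₂ : Set G) ∩ (C * Y' * C⁻¹) with hBdef
  have hBcomp : IsCompact B := ((hCcomp.mul hY'comp).mul hCcomp.inv).inter_left hK₂closed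
  have hBK₂ : B ⊆ (K₂ : Set G) := Set.inter_subset_left
  have hYY'O₁ : Y ∪ Y⁻¹ ⊆ (O₁ : Set G) := by
    intro y hy
    rcases hy with hy | hy
    · exact hYO₁ hy
    · rw [Set.mem_inv] at hy
      have := hYO₁ hy
      simpa using O₁.inv_mem this
  -- every element of K₂ is a word in B
  have genB : ∀ k ∈ K₂, k ∈ Subgroup.closure B := by
    have aux : ∀ l : List G, (∀ y ∈ l, y ∈ Y ∪ Y⁻¹) → ∀ k c : G, k ∈ K₂ → c ∈ C →
        k * c = l.prod → k ∈ Subgroup.closure B := by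
      intro l
      induction l using List.reverseRecOn with
      | nil =>
        intro _ k c hkK hcC heq
        apply Subgroup.subset_closure
        refine ⟨hkK, ?_⟩
        have hkc : k = c⁻¹ := by
          have : k * c = 1 := by simpa using heq
          exact eq_inv_of_mul_eq_one_left this
        have : (1 : G) * 1 * c⁻¹ ∈ C * Y' * C⁻¹ :=
          Set.mul_mem_mul (Set.mul_mem_mul h1C (Set.mem_insert _ _)) (Set.inv_mem_inv.mpr hcC)
        simpa [hkc] using this
      | append_singleton t y ih =>
        intro hly k c hkK hcC heq
        have hy : y ∈ Y ∪ Y⁻¹ := hly y (by simp)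
        have hty : ∀ z ∈ t, z ∈ Y ∪ Y⁻¹ := fun z hz => hly z (by simp [hz])
        have htO₁ : t.prod ∈ O₁ := list_prod_mem (fun z hz => hYY'O₁ (hty z hz))
        obtain ⟨q', c', hq', hc', heq'⟩ := hdecompC t.prod htO₁
        have hψq'K : ψ q' ∈ K₂ := hψK₂ q' hq'
        have hγ := ih hty (ψ q') c' hψq'K hc' heq'.symm
        have hbK : (ψ q')⁻¹ * k ∈ K₂ := K₂.mul_mem (K₂.inv_mem hψq'K) hkK
        have hk2 : k = ψ q' * c' * y * c⁻¹ := by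
          have h6 : k * c = (ψ q' * c') * y := by
            rw [heq]
            simp [heq']
          have := congrArg (fun z => z * c⁻¹) h6
          simpa [mul_assoc] using this
        have hbeq : (ψ q')⁻¹ * k = c' * (y * c⁻¹) := by
          rw [hk2]; group
        have hbB : (ψ q')⁻¹ * k ∈ B := by
          refine ⟨hbK, ?_⟩
          rw [hbeq]
          have : c' * y * c⁻¹ ∈ C * Y' * C⁻¹ :=
            Set.mul_mem_mul (Set.mul_mem_mul hc' (Set.mem_insert_of_mem _ hy))
              (Set.inv_mem_inv.mpr hcC)
          simpa [mul_assoc] using this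
        have hfin : k = ψ q' * ((ψ q')⁻¹ * k) := by group
        rw [hfin]
        exact Subgroup.mul_mem _ hγ (Subgroup.subset_closure hbB)
    intro k hk
    have hkO₁ : k ∈ O₁ := hK₂O₁ hk
    have hkO₁' : k ∈ Submonoid.closure (Y ∪ Y⁻¹) := by
      rw [← Subgroup.closure_toSubmonoid]
      exact hkO₁
    obtain ⟨l, hl, hprod⟩ := Submonoid.exists_list_of_mem_closure hkO₁'
    exact aux l hl k 1 hk h1C (by simpa using hprod.symm)
  -- finite cover of B by cosets of Wt with representatives in D
  obtain ⟨Sig0, hSig0D, hSig0fin, hBcov⟩ : ∃ Sig0 ⊆ (D : Set G), Sig0.Finite ∧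
      B ⊆ ⋃ d ∈ Sig0, d • (Wt : Set G) := by
    apply hBcomp.elim_finite_subcover_image (fun d _ => hWtopen.smul d)
    intro x hx
    obtain ⟨q, hqQ, h1, _⟩ := htrans x (hBK₂ hx)
    refine Set.mem_biUnion (Subgroup.mem_map.mpr ⟨q, hqQ, rfl⟩) ?_
    exact Set.mem_smul_set.mpr ⟨(ψ q)⁻¹ * x, h1, by simp⟩
  set Sig1 : Set G := Sig0 ∪ Sig0⁻¹ with hSig1def
  have hSig1fin : Sig1.Finite := hSig0fin.union hSig0fin.inv
  have hDsetK₂ : (D : Set G) ⊆ (K₂ : Set G) := fun d hd => hDK₂ hd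
  have hSig1K₂ : Sig1 ⊆ (K₂ : Set G) := by
    intro σ hσ
    rcases hσ with hσ | hσ
    · exact hDsetK₂ (hSig0D hσ)
    · rw [Set.mem_inv] at hσ
      have := hDsetK₂ (hSig0D hσ)
      simpa using K₂.inv_mem this
  -- double coset covers
  have hDC : ∀ σ ∈ Sig1, ∃ Dσ, Dσ ⊆ (D : Set G) ∧ Dσ.Finite ∧
      (((Wt : Set G) ∩ (K₂ : Set G)) * ({σ} : Set G) * ((Wt : Set G) ∩ (K₂ : Set G))) ⊆
        ⋃ d ∈ Dσ, d • (Wt : Set G) := by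
    intro σ hσ
    have hσK₂ : σ ∈ K₂ := hSig1K₂ hσ
    have hWtK₂comp : IsCompact ((Wt : Set G) ∩ (K₂ : Set G)) := hWtcomp.inter_right hK₂closed
    have hTcomp : IsCompact (((Wt : Set G) ∩ (K₂ : Set G)) * ({σ} : Set G) * ((Wt : Set G) ∩ (K₂ : Set G))) :=
      (hWtK₂comp.mul isCompact_singleton).mul hWtK₂comp
    apply hTcomp.elim_finite_subcover_image (fun d _ => hWtopen.smul d)
    intro x hx
    obtain ⟨uv, huv, v, hv, hxe⟩ := Set.mem_mul.mp hx
    obtain ⟨u, hu, σ', hσ', huσ⟩ := Set.mem_mul.mp huv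
    rw [Set.mem_singleton_iff] at hσ'
    subst hσ'
    have hxK₂ : x ∈ K₂ := by
      rw [← hxe, ← huσ]
      exact K₂.mul_mem (K₂.mul_mem hu.2 hσK₂) hv.2
    obtain ⟨q, hqQ, h1, _⟩ := htrans x hxK₂
    refine Set.mem_biUnion (Subgroup.mem_map.mpr ⟨q, hqQ, rfl⟩) ?_
    exact Set.mem_smul_set.mpr ⟨(ψ q)⁻¹ * x, h1, by simp⟩
  choose! DD hDD1 hDD2 hDD3 using hDC
  set 𝒟 : Set G := ⋃ σ ∈ Sig1, DD σ with h𝒟def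
  have h𝒟fin : 𝒟.Finite := hSig1fin.biUnion (fun σ hσ => hDD2 σ hσ)
  have h𝒟D : 𝒟 ⊆ (D : Set G) := by
    intro d hd
    obtain ⟨σ, hσ, hdσ⟩ := Set.mem_iUnion₂.mp hd
    exact hDD1 σ hσ hdσ
  have hQchoice : ∀ d ∈ 𝒟, ∃ q, q ∈ Q ∧ ψ q = d := by
    intro d hd
    obtain ⟨q, hq, rfl⟩ := Subgroup.mem_map.mp (h𝒟D hd)
    exact ⟨q, hq, rfl⟩
  choose! qf hqf1 hqf2 using hQchoice
  set Tset : Set H := qf '' 𝒟 with hTsetdef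
  have hTfin : Tset.Finite := h𝒟fin.image qf
  set Λ : Subgroup H := Subgroup.closure Tset with hΛdef
  -- one multiplication step
  have hstep : ∀ σ ∈ Sig1, ∀ u : G, u ∈ Wt → u ∈ K₂ →
      ∃ t v, t ∈ Tset ∧ v ∈ Wt ∧ v ∈ K₂ ∧ u * σ = ψ t * v := by
    intro σ hσ u huWt huK₂
    have hx : u * σ ∈ (((Wt : Set G) ∩ (K₂ : Set G)) * ({σ} : Set G) * ((Wt : Set G) ∩ (K₂ : Set G))) := by
      have h1m : (1 : G) ∈ (Wt : Set G) ∩ (K₂ : Set G) := ⟨Wt.one_mem, K₂.one_mem⟩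
      have h2 : u * σ ∈ ((Wt : Set G) ∩ (K₂ : Set G)) * ({σ} : Set G) :=
        Set.mul_mem_mul ⟨huWt, huK₂⟩ rfl
      have h3 := Set.mul_mem_mul h2 h1m
      simpa using h3
    obtain ⟨d, hd, hud⟩ := Set.mem_iUnion₂.mp (hDD3 σ hσ hx)
    have hd𝒟 : d ∈ 𝒟 := Set.mem_biUnion hσ hd
    obtain ⟨v, hvWt, hveq⟩ := Set.mem_smul_set.mp hud
    rw [smul_eq_mul] at hveq
    have hdK₂ : d ∈ K₂ := hDsetK₂ (h𝒟D hd𝒟)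
    have hσK₂ : σ ∈ K₂ := hSig1K₂ hσ
    have hvK₂ : v ∈ K₂ := by
      have hveq2 : v = d⁻¹ * (u * σ) := by rw [← hveq]; group
      rw [hveq2]
      exact K₂.mul_mem (K₂.inv_mem hdK₂) (K₂.mul_mem huK₂ hσK₂)
    refine ⟨qf d, v, Set.mem_image_of_mem qf hd𝒟, hvWt, hvK₂, ?_⟩
    rw [hqf2 d hd𝒟]
    exact hveq.symm
  -- FINAL decomposition along Λ
  have hfinal : ∀ k ∈ K₂, ∃ γ w, γ ∈ Λ ∧ w ∈ Wt ∧ k = ψ γ * w := by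
    have aux2 : ∀ l : List G, (∀ x ∈ l, x ∈ B ∪ B⁻¹) → ∀ γ w, γ ∈ Λ → w ∈ Wt → w ∈ K₂ →
        ∃ γ' w', γ' ∈ Λ ∧ w' ∈ Wt ∧ w' ∈ K₂ ∧ ψ γ * w * l.prod = ψ γ' * w' := by
      intro l
      induction l with
      | nil =>
        intro _ γ w h1 h2 h3
        exact ⟨γ, w, h1, h2, h3, by simp⟩
      | cons x t ih =>
        intro hl γ w hγ hw hwK
        have hx := hl x (by simp)
        have htl : ∀ z ∈ t, z ∈ B ∪ B⁻¹ := fun z hz => hl z (by simp [hz])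
        -- in both cases we produce a decomposition  w * x = ψ t₀ * v'  with t₀ ∈ Tset
        have hcase : ∃ t₀ v', t₀ ∈ Tset ∧ v' ∈ Wt ∧ v' ∈ K₂ ∧ w * x = ψ t₀ * v' := by
          rcases hx with hxB | hxBinv
          · obtain ⟨σ, hσ, hxσ⟩ := Set.mem_iUnion₂.mp (hBcov hxB)
            obtain ⟨v, hvWt, hveq⟩ := Set.mem_smul_set.mp hxσ
            rw [smul_eq_mul] at hveq
            have hσK₂ : σ ∈ K₂ := hDsetK₂ (hSig0D hσ)
            have hvK₂ : v ∈ K₂ := by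
              have hv2 : v = σ⁻¹ * x := by rw [← hveq]; group
              rw [hv2]
              exact K₂.mul_mem (K₂.inv_mem hσK₂) (hBK₂ hxB)
            obtain ⟨t₀, v₂, ht₀, hv₂Wt, hv₂K₂, heq2⟩ :=
              hstep σ (Set.mem_union_left _ hσ) w hw hwK
            refine ⟨t₀, v₂ * v, ht₀, Wt.mul_mem hv₂Wt hvWt, K₂.mul_mem hv₂K₂ hvK₂, ?_⟩
            rw [← hveq, show w * (σ * v) = (w * σ) * v by group, heq2]
            group
          · rw [Set.mem_inv] at hxBinv
            obtain ⟨σ, hσ, hxσ⟩ := Set.mem_iUnion₂.mp (hBcov hxBinv)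
            obtain ⟨v, hvWt, hveq⟩ := Set.mem_smul_set.mp hxσ
            rw [smul_eq_mul] at hveq
            have hσK₂ : σ ∈ K₂ := hDsetK₂ (hSig0D hσ)
            have hvK₂ : v ∈ K₂ := by
              have hv2 : v = σ⁻¹ * x⁻¹ := by rw [← hveq]; group
              rw [hv2]
              exact K₂.mul_mem (K₂.inv_mem hσK₂) (hBK₂ hxBinv)
            -- x = v⁻¹ * σ⁻¹
            have hxeq : x = v⁻¹ * σ⁻¹ := by
              calc x = (x⁻¹)⁻¹ := (inv_inv x).symm
                _ = (σ * v)⁻¹ := by rw [hveq]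
                _ = v⁻¹ * σ⁻¹ := mul_inv_rev σ v
            have hσ1 : σ⁻¹ ∈ Sig1 := by
              apply Set.mem_union_right
              rw [Set.mem_inv]
              simpa using hσ
            obtain ⟨t₀, v₂, ht₀, hv₂Wt, hv₂K₂, heq2⟩ :=
              hstep σ⁻¹ hσ1 (w * v⁻¹) (Wt.mul_mem hw (Wt.inv_mem hvWt))
                (K₂.mul_mem hwK (K₂.inv_mem hvK₂))
            refine ⟨t₀, v₂, ht₀, hv₂Wt, hv₂K₂, ?_⟩
            rw [hxeq, show w * (v⁻¹ * σ⁻¹) = (w * v⁻¹) * σ⁻¹ by group, heq2]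
        obtain ⟨t₀, v', ht₀, hv'Wt, hv'K₂, heq3⟩ := hcase
        have hγ' : γ * t₀ ∈ Λ := Λ.mul_mem hγ (Subgroup.subset_closure ht₀)
        obtain ⟨γ'', w'', hγ'', hw'', hw''K, heq4⟩ := ih htl (γ * t₀) v' hγ' hv'Wt hv'K₂
        refine ⟨γ'', w'', hγ'', hw'', hw''K, ?_⟩
        calc ψ γ * w * (x :: t).prod = ψ (γ * t₀) * v' * t.prod := by
              rw [List.prod_cons,
                show ψ γ * w * (x * t.prod) = (ψ γ * (w * x)) * t.prod by group, heq3, map_mul]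
              group
          _ = ψ γ'' * w'' := heq4
    intro k hk
    have hkB' : k ∈ Submonoid.closure (B ∪ B⁻¹) := by
      rw [← Subgroup.closure_toSubmonoid]
      exact genB k hk
    obtain ⟨l, hl, hprod⟩ := Submonoid.exists_list_of_mem_closure hkB'
    obtain ⟨γ, w, hγ, hw, _, heq⟩ := aux2 l hl 1 1 Λ.one_mem Wt.one_mem K₂.one_mem
    refine ⟨γ, w, hγ, hw, ?_⟩
    rw [← hprod, ← heq]
    simp
  -- assemble the witness for H
  obtain ⟨U₀, hU₀open, hU₀comp⟩ := my_vanDantzig (H := H)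
  set OH : Subgroup H := Subgroup.closure ((U₀ : Set H) ∪ Tset) with hOHdef
  have hU₀OH : U₀ ≤ OH := fun u hu => Subgroup.subset_closure (Or.inl hu)
  have hTsetOH : Tset ⊆ (OH : Set H) := fun t ht => Subgroup.subset_closure (Or.inr ht)
  have hΛOH : Λ ≤ OH := by
    rw [hΛdef]
    exact (Subgroup.closure_le _).mpr hTsetOH
  have hOHopen : IsOpen (OH : Set H) := Subgroup.isOpen_mono hU₀OH hU₀open
  set WH : Subgroup H := U₀ ⊓ Subgroup.comap ψ Wst with hWHdef
  have hWHcoe : (WH : Set H) = (U₀ : Set H) ∩ ⇑ψ ⁻¹' (Wst : Set G) := by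
    rw [hWHdef, Subgroup.coe_inf, Subgroup.coe_comap]
  have hWHopen : IsOpen (WH : Set H) := by
    rw [hWHcoe]
    exact hU₀open.inter (hWstopen.preimage hcont)
  have hWHcomp : IsCompact (WH : Set H) := by
    rw [hWHcoe]
    exact hU₀comp.inter_right (hWstclosed.preimage hcont)
  have hWHOH : WH ≤ OH := le_trans inf_le_left hU₀OH
  refine ⟨OH, WH, hOHopen, ⟨(U₀ : Set H) ∪ Tset, Subgroup.subset_closure,
    hU₀comp.union hTfin.isCompact, rfl⟩, hWHOH, hWHopen, hWHcomp, ?_⟩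
  -- trivial core
  rw [Subgroup.eq_bot_iff_forall]
  intro x hx
  have hxP : ∀ b : OH, b * x * b⁻¹ ∈ WH.subgroupOf OH := hx
  have hψ1 : ψ (x : H) = 1 := by
    apply hkey
    · have h1 := hxP 1
      have h1' : x ∈ WH.subgroupOf OH := by simpa using h1
      have hxWH : (x : H) ∈ WH := (Subgroup.mem_subgroupOf).1 h1'
      exact (Subgroup.mem_inf.1 hxWH).2
    · intro q hq
      obtain ⟨γ, w, hγ, hw, heq⟩ := hfinal (ψ q) (hψK₂ q hq)
      have hγOH : γ ∈ OH := hΛOH hγ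
      have hb := hxP (⟨γ, hγOH⟩ : OH)⁻¹
      rw [Subgroup.mem_subgroupOf] at hb
      have hb2 : γ⁻¹ * (x : H) * γ ∈ WH := by simpa using hb
      have hb3 : ψ (γ⁻¹ * (x : H) * γ) ∈ Wst :=
        Subgroup.mem_comap.1 (Subgroup.mem_inf.1 hb2).2
      rw [heq]
      have hwe : (ψ γ * w)⁻¹ * ψ (x : H) * (ψ γ * w) =
          w⁻¹ * ((ψ γ)⁻¹ * ψ (x : H) * ψ γ) * w := by group
      rw [hwe]
      have hco : (ψ γ)⁻¹ * ψ (x : H) * ψ γ = ψ (γ⁻¹ * (x : H) * γ) := by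
        rw [map_mul, map_mul, map_inv]
      rw [hco]
      have := hWstconj w⁻¹ (W.inv_mem (hWtW hw)) _ hb3
      simpa using this
  have hx1 : (x : H) = 1 := hinj (by rw [hψ1, map_one])
  exact Subtype.ext (by simp [hx1])
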